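/- For a finite-dimensional Lie algebra 𝔤 over an infinite field, the index of 𝔤 (the minimum over f ∈ 𝔤* of dim ker (f([e_i,e_j]))) equals the kernel dimension of the structure matrix B = ([e_i,e_j]) regarded as a matrix over the field of rational functions on 𝔤*, and equals dim ker B_f for f in a nonempty Zariski-open subset of 𝔤*. -/

import Mathlib

open Module Matrix MvPolynomial Submodule

section Aux
variable {K : Type*} [Field K] {m l : Type*} [Fintype m] [Fintype l]

lemma aux_submatrix_rank_le [DecidableEq m] [DecidableEq l] {r : ℕ}
    (A : Matrix m l K) (ri : Fin r → m) (cj : Fin r → l) :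
    (A.submatrix ri cj).rank ≤ A.rank := by
  have h : A.submatrix ri cj =
      (Matrix.of fun i k => if ri i = k then (1:K) else 0) * A *
      (Matrix.of fun k j => if k = cj j then (1:K) else 0) := by
    ext i j
    simp [Matrix.mul_apply, Finset.sum_ite_eq, Finset.sum_ite_eq', ite_mul, mul_ite]
  rw [h]
  exact (Matrix.rank_mul_le_left _ _).trans (Matrix.rank_mul_le_right _ _)

lemma aux_exists_linearIndependent_cols {A : Matrix m l K} {r : ℕ} (h : r ≤ A.rank) :
    ∃ c : Fin r → l, LinearIndependent K fun j => Aᵀ (c j) := by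
  classical
  obtain ⟨s, hst, hsp, hli⟩ := exists_linearIndependent K (Set.range Aᵀ)
  have hfin : s.Finite := (Set.finite_range Aᵀ).subset hst
  haveI := hfin.fintype
  have hcard : r ≤ Fintype.card s := by
    have h1 : finrank K (span K s) = s.toFinset.card := finrank_span_set_eq_card hli
    have h2 : A.rank = finrank K (span K s) := by
      rw [rank_eq_finrank_span_cols, show A.col = Aᵀ from rfl, ← hsp]
    rw [Set.toFinset_card] at h1
    omega
  let e : Fin r → s := fun i => (Fintype.equivFin s).symm (Fin.castLE hcard i)
  have he : Function.Injective e := by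
    intro a b hab
    have := (Fintype.equivFin s).symm.injective hab
    exact Fin.castLE_injective hcard this
  have hex : ∀ i : Fin r, ∃ j : l, Aᵀ j = (e i : m → K) := fun i => hst (e i).2
  choose c hc using hex
  refine ⟨c, ?_⟩
  have heq : (fun j => Aᵀ (c j)) = (Subtype.val ∘ e) := funext fun j => hc j
  rw [heq]
  exact hli.comp e he

lemma aux_rank_le_iff_minor [DecidableEq m] [DecidableEq l]
    (A : Matrix m l K) (r : ℕ) :
    r ≤ A.rank ↔ ∃ (ri : Fin r → m) (cj : Fin r → l), (A.submatrix ri cj).det ≠ 0 := by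
  constructor
  · intro h
    obtain ⟨cj, hcj⟩ := aux_exists_linearIndependent_cols h
    set M := A.submatrix id cj with hM
    have hMrank : M.rank = r := by
      rw [rank_eq_finrank_span_cols]
      have hMT : Mᵀ = fun j => Aᵀ (cj j) := rfl
      rw [show M.col = Mᵀ from rfl, hMT, finrank_span_eq_card hcj, Fintype.card_fin]
    have h2 : r ≤ Mᵀ.rank := by rw [rank_transpose, hMrank]
    obtain ⟨ri, hri⟩ := aux_exists_linearIndependent_cols h2
    refine ⟨ri, cj, ?_⟩
    have hu : IsUnit (A.submatrix ri cj) := by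
      rw [← Matrix.linearIndependent_rows_iff_isUnit]
      exact hri
    exact isUnit_iff_ne_zero.mp ((Matrix.isUnit_iff_isUnit_det _).mp hu)
  · rintro ⟨ri, cj, hd⟩
    have hu : IsUnit (A.submatrix ri cj) :=
      (Matrix.isUnit_iff_isUnit_det _).mpr (isUnit_iff_ne_zero.mpr hd)
    have := Matrix.rank_of_isUnit _ hu
    rw [Fintype.card_fin] at this
    exact this ▸ aux_submatrix_rank_le A ri cj

lemma aux_finrank_ker {n : ℕ} (A : Matrix (Fin n) (Fin n) K) :
    finrank K (LinearMap.ker A.mulVecLin) = n - A.rank := by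
  have h := LinearMap.finrank_range_add_finrank_ker A.mulVecLin
  rw [Module.finrank_fin_fun] at h
  have : A.rank = finrank K (LinearMap.range A.mulVecLin) := rfl
  omega

end Aux

lemma aux_det_map {R S : Type*} [CommRing R] [CommRing S] {q : ℕ}
    (φ : R →+* S) (M : Matrix (Fin q) (Fin q) R) :
    (M.map φ).det = φ M.det := by
  rw [RingHom.map_det, RingHom.mapMatrix_apply]

theorem lie_index_generic {k L : Type*} [Field k] [Infinite k]
    [LieRing L] [LieAlgebra k L] {n : ℕ} (b : Basis (Fin n) k L)
    (Bpoly : Matrix (Fin n) (Fin n) (FractionRing (MvPolynomial (Fin n) k)))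
    (hBpoly : ∀ i j, Bpoly i j = algebraMap (MvPolynomial (Fin n) k) _
      (∑ m, MvPolynomial.C (b.repr ⁅b i, b j⁆ m) * X m))
    (Bf : Module.Dual k L → Matrix (Fin n) (Fin n) k)
    (hBf : ∀ f i j, Bf f i j = f ⁅b i, b j⁆)
    (ind : ℕ)
    (hind : ind = sInf { d | ∃ f : Module.Dual k L,
      d = Module.finrank k (LinearMap.ker (Bf f).mulVecLin) }) :
    ind = Module.finrank (FractionRing (MvPolynomial (Fin n) k))
        (LinearMap.ker Bpoly.mulVecLin) ∧
    ∃ p : MvPolynomial (Fin n) k, p ≠ 0 ∧ ∀ f : Module.Dual k L,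
      MvPolynomial.eval (fun m => f (b m)) p ≠ 0 →
        Module.finrank k (LinearMap.ker (Bf f).mulVecLin) = ind := by
  classical
  set Bp : Matrix (Fin n) (Fin n) (MvPolynomial (Fin n) k) :=
    Matrix.of fun i j => ∑ m, MvPolynomial.C (b.repr ⁅b i, b j⁆ m) * X m with hBp
  set σ : MvPolynomial (Fin n) k →+* FractionRing (MvPolynomial (Fin n) k) :=
    algebraMap _ _ with hσ
  have hB : Bpoly = Bp.map σ := by
    ext i j; rw [hBpoly]; rfl
  have hBf' : ∀ f : Module.Dual k L,
      Bf f = Bp.map (MvPolynomial.eval fun m => f (b m)) := by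
    intro f
    ext i j
    have h1 : f ⁅b i, b j⁆ = ∑ m, b.repr ⁅b i, b j⁆ m * f (b m) := by
      conv_lhs => rw [← b.sum_repr ⁅b i, b j⁆]
      simp only [map_sum, map_smul, smul_eq_mul]
    rw [hBf, h1]
    simp [Bp, Matrix.map_apply]
  set r := Bpoly.rank with hr
  have hsub : ∀ (f : Module.Dual k L) {q : ℕ} (ri cj : Fin q → Fin n),
      (Bf f).submatrix ri cj = (Bp.submatrix ri cj).map
        (MvPolynomial.eval fun m => f (b m)) := by
    intro f q ri cj
    ext i j
    simp only [Matrix.submatrix_apply, Matrix.map_apply]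
    rw [hBf' f]
    rfl
  -- evaluated matrices have rank ≤ r
  have key1 : ∀ f : Module.Dual k L, (Bf f).rank ≤ r := by
    intro f
    obtain ⟨ri, cj, hd⟩ := (aux_rank_le_iff_minor (Bf f) (Bf f).rank).mp le_rfl
    have hpne : (Bp.submatrix ri cj).det ≠ 0 := by
      intro h0
      apply hd
      rw [hsub f ri cj, aux_det_map, h0, map_zero]
    have hdK : (Bpoly.submatrix ri cj).det ≠ 0 := by
      have h2 : Bpoly.submatrix ri cj = (Bp.submatrix ri cj).map σ := by
        rw [hB]; rfl
      rw [h2, aux_det_map]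
      intro h0
      exact hpne (IsFractionRing.injective (MvPolynomial (Fin n) k)
        (FractionRing (MvPolynomial (Fin n) k)) (by rw [h0, map_zero]))
    exact (aux_rank_le_iff_minor Bpoly (Bf f).rank).mpr ⟨ri, cj, hdK⟩
  -- nonzero r×r minor of Bpoly
  obtain ⟨ri, cj, hminor⟩ := (aux_rank_le_iff_minor Bpoly r).mp le_rfl
  set p := (Bp.submatrix ri cj).det with hp'
  have hpK : σ p = (Bpoly.submatrix ri cj).det := by
    have h2 : Bpoly.submatrix ri cj = (Bp.submatrix ri cj).map σ := by
      rw [hB]; rfl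
    rw [h2, aux_det_map]
  have hp : p ≠ 0 := by
    intro h0
    rw [h0, map_zero] at hpK
    exact hminor hpK.symm
  have key2 : ∀ f : Module.Dual k L,
      MvPolynomial.eval (fun m => f (b m)) p ≠ 0 → (Bf f).rank = r := by
    intro f hf
    refine le_antisymm (key1 f) ?_
    refine (aux_rank_le_iff_minor (Bf f) r).mpr ⟨ri, cj, ?_⟩
    rw [hsub f ri cj, aux_det_map]
    exact hf
  -- a point where p doesn't vanish, and corresponding functional
  obtain ⟨c, hc⟩ : ∃ c : Fin n → k, MvPolynomial.eval c p ≠ 0 := by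
    by_contra h
    push_neg at h
    exact hp (MvPolynomial.funext fun x => by simpa using h x)
  set f0 : Module.Dual k L := b.constr k c with hf0
  have hf0b : ∀ m, f0 (b m) = c m := fun m => b.constr_basis k c m
  have hf0p : MvPolynomial.eval (fun m => f0 (b m)) p ≠ 0 := by
    have h3 : (fun m => f0 (b m)) = c := funext hf0b
    rw [h3]; exact hc
  have hrank0 : (Bf f0).rank = r := key2 f0 hf0p
  -- compute the infimum
  have hind' : ind = n - r := by
    rw [hind]
    apply le_antisymm
    · apply Nat.sInf_le
      exact ⟨f0, by rw [aux_finrank_ker, hrank0]⟩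
    · refine le_csInf ⟨_, f0, rfl⟩ ?_
      rintro d ⟨f, rfl⟩
      rw [aux_finrank_ker]
      exact Nat.sub_le_sub_left (key1 f) n
  constructor
  · rw [hind', aux_finrank_ker, hr]
  · exact ⟨p, hp, fun f hf => by rw [aux_finrank_ker, key2 f hf, hind']⟩
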